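/- Let (Ω, 𝓕, P) be a probability space and let κ : (0,1] × Ω → [0,∞) be a family of random variables such that κ(h,·) is measurable for each h ∈ (0,1], h ↦ κ(h,ω) is nondecreasing for every ω ∈ Ω, κ(1,·) < ∞ almost surely, and P( lim_{h→0+} κ(h,·) = 0 ) = 1. Then there exist a random variable Θ : Ω → [0,∞) which is finite almost surely and a nondecreasing deterministic function ω_0 : (0,1] → (0,∞) with lim_{h→0+} ω_0(h) = 0, such that almost surely κ(h,·) ≤ Θ · ω_0(h) for all h ∈ (0,1] simultaneously. -/

import Mathlib

open MeasureTheory Set Filter Topology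

set_option maxHeartbeats 1000000 in
/-- Factorization of a monotone family of nonnegative random variables tending
to zero a.s.: `κ(h,·) ≤ Θ·ω₀(h)` with an a.s. finite random variable `Θ` and a
deterministic module of continuity `ω₀`. -/
theorem module_of_continuity_factorization
    {Ω : Type*} [MeasurableSpace Ω] (P : Measure Ω) [IsProbabilityMeasure P]
    (κ : ℝ → Ω → ℝ)
    (hmeas : ∀ h ∈ Ioc (0 : ℝ) 1, Measurable (κ h))
    (hnonneg : ∀ h ∈ Ioc (0 : ℝ) 1, ∀ ω, 0 ≤ κ h ω)
    (hmono : ∀ ω, ∀ h₁ ∈ Ioc (0 : ℝ) 1, ∀ h₂ ∈ Ioc (0 : ℝ) 1,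
      h₁ ≤ h₂ → κ h₁ ω ≤ κ h₂ ω)
    (hlim : P {ω | Tendsto (fun h => κ h ω) (𝓝[>] (0 : ℝ)) (𝓝 0)} = 1) :
    ∃ (Θ : Ω → ℝ) (ω₀ : ℝ → ℝ), Measurable Θ ∧ (∀ ω, 0 ≤ Θ ω) ∧
      (∀ h ∈ Ioc (0 : ℝ) 1, 0 < ω₀ h) ∧ MonotoneOn ω₀ (Ioc (0 : ℝ) 1) ∧
      Tendsto ω₀ (𝓝[>] (0 : ℝ)) (𝓝 0) ∧
      ∀ᵐ ω ∂P, ∀ h ∈ Ioc (0 : ℝ) 1, κ h ω ≤ Θ ω * ω₀ h := by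
  classical
  have hsub : ∀ m : ℕ, (1 : ℝ) / (m + 1) ∈ Ioc (0 : ℝ) 1 := by
    intro m
    constructor
    · positivity
    · rw [div_le_one (by positivity)]
      exact le_add_of_nonneg_left (Nat.cast_nonneg m)
  -- Step 1: convergence in probability along the sequence 1/(m+1)
  have step1 : ∀ ε : ℝ, 0 < ε →
      Tendsto (fun m : ℕ => P {ω | ε < κ (1 / (m + 1)) ω}) atTop (𝓝 0) := by
    intro ε hε
    set T : ℕ → Set Ω := fun m => {ω | ε < κ (1 / (m + 1)) ω} with hT
    have hTmeas : ∀ m, MeasurableSet (T m) :=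
      fun m => measurableSet_lt measurable_const (hmeas _ (hsub m))
    have hTanti : Antitone T := by
      intro a b hab ω hω
      refine lt_of_lt_of_le hω (hmono ω _ (hsub b) _ (hsub a) ?_)
      apply div_le_div_of_nonneg_left (by norm_num) (by positivity)
      exact_mod_cast add_le_add_left (Nat.cast_le.mpr hab) 1
    have hSmeas : MeasurableSet (⋂ m, T m) := MeasurableSet.iInter hTmeas
    have h0 : P (⋂ m, T m) = 0 := by
      have hsubset : {ω | Tendsto (fun h => κ h ω) (𝓝[>] (0 : ℝ)) (𝓝 0)} ⊆ (⋂ m, T m)ᶜ := by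
        intro ω hω
        have hseq : Tendsto (fun m : ℕ => (1 : ℝ) / (m + 1)) atTop (𝓝[>] (0 : ℝ)) := by
          rw [tendsto_nhdsWithin_iff]
          exact ⟨tendsto_one_div_add_atTop_nhds_zero_nat,
            Eventually.of_forall fun m => (hsub m).1⟩
        have := (hω.comp hseq).eventually_lt_const hε
        obtain ⟨m, hm⟩ := this.exists
        intro hmem
        exact lt_asymm (mem_iInter.1 hmem m) hm
      have h1 : P (⋂ m, T m)ᶜ = 1 :=
        le_antisymm prob_le_one (hlim ▸ measure_mono hsubset)
      have h2 : P (⋂ m, T m) + P (⋂ m, T m)ᶜ = 1 := by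
        rw [measure_add_measure_compl hSmeas, measure_univ]
      rw [h1] at h2
      have h3 := congrArg (fun x => x - 1) h2
      simpa [ENNReal.add_sub_cancel_right ENNReal.one_ne_top] using h3
    have := tendsto_measure_iInter_atTop (fun m => (hTmeas m).nullMeasurableSet) hTanti
      ⟨0, measure_ne_top P _⟩
    rw [h0] at this
    exact this
  -- Step 2: choose a sequence q n ↓ with good probability bounds
  have key : ∀ n : ℕ, ∃ M : ℕ, ∀ m, M ≤ m →
      P {ω | (1 / 2 : ℝ) ^ n < κ (1 / (m + 1)) ω} ≤ (2⁻¹ : ENNReal) ^ n := by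
    intro n
    have := (step1 ((1 / 2) ^ n) (by positivity)).eventually_lt_const
      (ENNReal.pow_pos (ENNReal.inv_pos.mpr (ENNReal.ofNat_ne_top (n := 2))) n)
    obtain ⟨M, hM⟩ := eventually_atTop.1 this
    exact ⟨M, fun m hm => (hM m hm).le⟩
  choose M hM using key
  set φ : ℕ → ℕ := fun n => Nat.rec 0 (fun k ih => max (ih + 1) (M (k + 1))) n with hφ
  have hφsucc : ∀ n, φ (n + 1) = max (φ n + 1) (M (n + 1)) := fun n => rfl
  have hφmono : StrictMono φ := by
    apply strictMono_nat_of_lt_succ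
    intro n
    rw [hφsucc]
    exact lt_of_lt_of_le (Nat.lt_succ_self _) (le_max_left _ _)
  set q : ℕ → ℝ := fun n => 1 / (φ n + 1) with hq
  have hq0 : q 0 = 1 := by simp [hq, hφ]
  have hqmem : ∀ n, q n ∈ Ioc (0 : ℝ) 1 := fun n => hsub (φ n)
  have hqanti : Antitone q := by
    intro a b hab
    apply div_le_div_of_nonneg_left (by norm_num) (by positivity)
    exact_mod_cast add_le_add_left (Nat.cast_le.mpr (hφmono.monotone hab)) 1
  have hqbound : ∀ n, P {ω | (1 / 2 : ℝ) ^ n < κ (q n) ω} ≤ (2⁻¹ : ENNReal) ^ n := by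
    intro n
    cases n with
    | zero => simpa using prob_le_one
    | succ k =>
      exact hM (k + 1) (φ (k + 1)) (le_trans (le_max_right _ _) (hφsucc k).ge)
  have hqsmall : ∀ h : ℝ, 0 < h → ∃ n, q (n + 1) < h ∧ (h ≤ 1 → h ≤ q n) := by
    intro h hh
    have hex : ∃ n, q (n + 1) < h := by
      obtain ⟨n, hn⟩ := exists_nat_one_div_lt hh
      refine ⟨n, lt_of_le_of_lt ?_ hn⟩
      apply div_le_div_of_nonneg_left (by norm_num) (by positivity)
      have h1 : (n + 1 : ℕ) ≤ φ (n + 1) := hφmono.le_apply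
      have h2 : ((n : ℝ) + 1) ≤ (φ (n + 1) : ℝ) := by exact_mod_cast h1
      linarith
    refine ⟨Nat.find hex, Nat.find_spec hex, ?_⟩
    intro h1
    cases hc : Nat.find hex with
    | zero => rw [hq0]; exact h1
    | succ j =>
      exact not_lt.1 (Nat.find_min hex (lt_of_lt_of_eq (Nat.lt_succ_self j) hc.symm))
  choose idx hidx1 hidx2 using hqsmall
  have hidxmono : ∀ (h₁ : ℝ) (hh₁ : 0 < h₁) (h₂ : ℝ) (hh₂ : 0 < h₂), h₁ ≤ h₂ → h₂ ≤ 1 →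
      idx h₂ hh₂ ≤ idx h₁ hh₁ := by
    intro h₁ hh₁ h₂ hh₂ hle h2le
    by_contra hc
    push_neg at hc
    have h1 : q (idx h₂ hh₂) ≤ q (idx h₁ hh₁ + 1) := hqanti hc
    have h2 : h₂ ≤ q (idx h₂ hh₂) := hidx2 h₂ hh₂ h2le
    have h3 : q (idx h₁ hh₁ + 1) < h₁ := hidx1 h₁ hh₁
    linarith
  -- Step 3: Borel–Cantelli
  have hBC : ∀ᵐ ω ∂P, ∃ N : ℕ, ∀ n, N ≤ n → κ (q n) ω ≤ (1 / 2 : ℝ) ^ n := by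
    have hsum : (∑' n : ℕ, P {ω | (1 / 2 : ℝ) ^ n < κ (q n) ω}) ≠ ⊤ := by
      have hle := ENNReal.tsum_le_tsum hqbound
      rw [ENNReal.tsum_geometric] at hle
      refine ne_top_of_le_ne_top ?_ hle
      simp
    filter_upwards [MeasureTheory.ae_eventually_notMem hsum] with ω hω
    obtain ⟨N, hN⟩ := eventually_atTop.1 hω
    exact ⟨N, fun n hn => not_lt.1 (hN n hn)⟩
  -- Definitions of Θ and ω₀
  refine ⟨fun ω => 2 ^ (if hw : ∃ N : ℕ, ∀ n, N ≤ n → κ (q n) ω ≤ (1 / 2 : ℝ) ^ n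
      then Nat.find hw else 0) * (1 + κ 1 ω),
    fun h => if hh : 0 < h then (1 / 2 : ℝ) ^ (idx h hh) else 1,
    ?_, ?_, ?_, ?_, ?_, ?_⟩
  · -- Measurability of Θ
    have hone : (1 : ℝ) ∈ Ioc (0 : ℝ) 1 := by norm_num
    have hBmeas : ∀ N : ℕ, MeasurableSet {ω : Ω | ∀ n, N ≤ n → κ (q n) ω ≤ (1 / 2 : ℝ) ^ n} := by
      intro N
      have : {ω : Ω | ∀ n, N ≤ n → κ (q n) ω ≤ (1 / 2 : ℝ) ^ n} =
          ⋂ n, ⋂ (_ : N ≤ n), {ω | κ (q n) ω ≤ (1 / 2 : ℝ) ^ n} := by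
        ext ω; simp
      rw [this]
      exact MeasurableSet.iInter fun n => MeasurableSet.iInter fun _ =>
        measurableSet_le (hmeas _ (hqmem n)) measurable_const
    have hBmono : Monotone (fun N : ℕ =>
        {ω : Ω | ∀ n, N ≤ n → κ (q n) ω ≤ (1 / 2 : ℝ) ^ n}) := by
      intro a b hab ω hω n hn
      exact hω n (le_trans hab hn)
    set Nfun : Ω → ℕ := fun ω =>
      if hw : ∃ N : ℕ, ∀ n, N ≤ n → κ (q n) ω ≤ (1 / 2 : ℝ) ^ n then Nat.find hw else 0
      with hNfun
    have hNmeas : Measurable Nfun := by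
      apply measurable_to_countable'
      intro k
      cases k with
      | zero =>
        have : Nfun ⁻¹' {0} = {ω : Ω | ∀ n, 0 ≤ n → κ (q n) ω ≤ (1 / 2 : ℝ) ^ n} ∪
            (⋃ N : ℕ, {ω : Ω | ∀ n, N ≤ n → κ (q n) ω ≤ (1 / 2 : ℝ) ^ n})ᶜ := by
          ext ω
          simp only [mem_preimage, mem_singleton_iff, hNfun, mem_union, mem_compl_iff,
            mem_iUnion, mem_setOf_eq]
          by_cases hw : ∃ N : ℕ, ∀ n, N ≤ n → κ (q n) ω ≤ (1 / 2 : ℝ) ^ n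
          · rw [dif_pos hw]
            constructor
            · intro h0
              left
              have := Nat.find_spec hw
              rw [h0] at this
              exact this
            · intro hc
              rcases hc with hc | hc
              · exact Nat.eq_zero_of_le_zero (Nat.find_le hc)
              · exact absurd hw (by simpa using hc)
          · rw [dif_neg hw]
            simp only [true_iff]
            right
            simpa using hw
        rw [this]
        exact (hBmeas 0).union (MeasurableSet.iUnion hBmeas).compl
      | succ k =>
        have : Nfun ⁻¹' {k + 1} =
            {ω : Ω | ∀ n, k + 1 ≤ n → κ (q n) ω ≤ (1 / 2 : ℝ) ^ n} \
            {ω : Ω | ∀ n, k ≤ n → κ (q n) ω ≤ (1 / 2 : ℝ) ^ n} := by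
          ext ω
          simp only [mem_preimage, mem_singleton_iff, hNfun, mem_diff, mem_setOf_eq]
          by_cases hw : ∃ N : ℕ, ∀ n, N ≤ n → κ (q n) ω ≤ (1 / 2 : ℝ) ^ n
          · rw [dif_pos hw]
            constructor
            · intro hk
              refine ⟨hk ▸ Nat.find_spec hw, ?_⟩
              have := Nat.find_min hw (m := k) (by omega)
              simpa using this
            · rintro ⟨h1, h2⟩
              have hle : Nat.find hw ≤ k + 1 := Nat.find_le h1
              have hgt : k < Nat.find hw := by
                by_contra hc
                exact h2 (hBmono (not_lt.1 hc) (Nat.find_spec hw))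
              omega
          · rw [dif_neg hw]
            constructor
            · intro h0; exact absurd h0 (by omega)
            · rintro ⟨h1, _⟩
              exact absurd ⟨k + 1, h1⟩ hw
        rw [this]
        exact (hBmeas (k + 1)).diff (hBmeas k)
    have h2pow : Measurable fun ω => (2 : ℝ) ^ (Nfun ω) :=
      (measurable_from_top (f := fun n : ℕ => (2 : ℝ) ^ n)).comp hNmeas
    exact h2pow.mul (measurable_const.add (hmeas 1 hone))
  · -- nonnegativity of Θ
    intro ω
    have := hnonneg 1 (by norm_num) ω
    positivity
  · -- positivity of ω₀
    intro h hh
    simp only []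
    rw [dif_pos hh.1]
    positivity
  · -- monotonicity of ω₀
    intro h₁ hh₁ h₂ hh₂ hle
    simp only []
    rw [dif_pos hh₁.1, dif_pos hh₂.1]
    exact pow_le_pow_of_le_one (by norm_num) (by norm_num)
      (hidxmono h₁ hh₁.1 h₂ hh₂.1 hle hh₂.2)
  · -- tendsto of ω₀
    rw [Metric.tendsto_nhdsWithin_nhds]
    intro ε hε
    obtain ⟨m, hm⟩ := exists_pow_lt_of_lt_one hε (by norm_num : (1 / 2 : ℝ) < 1)
    refine ⟨q (m + 1), (hqmem (m + 1)).1, ?_⟩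
    intro h hh hd
    rw [mem_Ioi] at hh
    rw [Real.dist_eq, sub_zero, abs_of_pos hh] at hd
    rw [dif_pos hh, Real.dist_eq, sub_zero,
      abs_of_pos (pow_pos (by norm_num : (0:ℝ) < 1 / 2) (idx h hh))]
    have hfind : m ≤ idx h hh := by
      by_contra hc
      push_neg at hc
      have h1 : q (m + 1) ≤ q (idx h hh + 1) := hqanti (Nat.succ_le_succ hc.le)
      have h2 : q (idx h hh + 1) < h := hidx1 h hh
      linarith
    exact lt_of_le_of_lt
      (pow_le_pow_of_le_one (by norm_num) (by norm_num) hfind) hm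
  · -- the a.e. bound
    filter_upwards [hBC] with ω hω h hh
    rw [dif_pos hω, dif_pos hh.1]
    set N := Nat.find hω with hN
    set m := idx h hh.1 with hmdef
    have hκ1 : 0 ≤ κ 1 ω := hnonneg 1 (by norm_num) ω
    have hhqm : h ≤ q m := hidx2 h hh.1 hh.2
    have hκh : κ h ω ≤ κ (q m) ω := hmono ω h hh (q m) (hqmem m) hhqm
    rcases le_or_gt N m with hNm | hNm
    · -- m ≥ N : use the Borel–Cantelli bound
      have hb : κ (q m) ω ≤ (1 / 2 : ℝ) ^ m := Nat.find_spec hω m hNm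
      have h1 : (1 : ℝ) ≤ 2 ^ N * (1 + κ 1 ω) := by
        have h2 : (1 : ℝ) ≤ 2 ^ N := one_le_pow₀ (by norm_num)
        nlinarith
      calc κ h ω ≤ (1 / 2 : ℝ) ^ m := le_trans hκh hb
        _ ≤ 2 ^ N * (1 + κ 1 ω) * (1 / 2 : ℝ) ^ m :=
          le_mul_of_one_le_left (by positivity) h1
    · -- m < N : use κ ≤ κ(1)
      have hb : κ (q m) ω ≤ κ 1 ω := hmono ω (q m) (hqmem m) 1 (by norm_num) (hqmem m).2
      have hpow : (1 : ℝ) ≤ 2 ^ N * (1 / 2 : ℝ) ^ m := by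
        have : (2 : ℝ) ^ m ≤ 2 ^ N := pow_le_pow_right₀ (by norm_num) hNm.le
        rw [show ((1 : ℝ) / 2) ^ m = ((2 : ℝ) ^ m)⁻¹ by rw [one_div, inv_pow],
          ← div_eq_mul_inv, le_div_iff₀ (by positivity)]
        simpa using this
      have hk : κ h ω ≤ 1 + κ 1 ω := by linarith
      calc κ h ω ≤ 1 + κ 1 ω := hk
        _ ≤ (2 ^ N * (1 / 2 : ℝ) ^ m) * (1 + κ 1 ω) :=
          le_mul_of_one_le_left (by linarith) hpow
        _ = 2 ^ N * (1 + κ 1 ω) * (1 / 2 : ℝ) ^ m := by ring
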